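/- Assume h21/h22 ≤ b + b' and h11/h21 < √p2·(a+a')/(√p1·(b+b')). Then the supremum of f(w1,w2) over the interval-restricted feasible set D equals (h11/(a+a'))·W1, and it is attained at (w1,w2) = ( W1 , ((b+b')·h11/((a+a')·h21))·W1 ). -/

import Mathlib

/-- The minimum Euclidean half-distance at receiver 1: the minimum of
`|h11·w1·n − h21·w2·m|` over integer pairs `(m,n) ≠ (0,0)` with
`|m| ≤ M−1` and `|n| ≤ M−1`. -/
noncomputable def minDist1 (M : ℕ) (h11 h21 w1 w2 : ℝ) : ℝ :=
  sInf {d : ℝ | ∃ m n : ℤ, (m, n) ≠ (0, 0) ∧ |m| ≤ (M : ℤ) - 1 ∧ |n| ≤ (M : ℤ) - 1 ∧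
      d = |h11 * w1 * n - h21 * w2 * m|}

/-- The smaller of the two receivers minimum Euclidean half-distances. -/
noncomputable def f (M : ℕ) (h11 h21 h22 w1 w2 : ℝ) : ℝ :=
  min (minDist1 M h11 h21 w1 w2) (h22 * w2)

/-- `b/a < b'/a'` is a Farey pair of order `K` (numerators `b, b'`,
denominators `a, a'`): `a ≥ 1`, `b' ≥ 1`, the pairs are coprime, all entries
are at most `K`, `b·a' < b'·a`, and no coprime pair `(m,n)` of nonnegative
integers, not both zero, with `m ≤ K`, `n ≤ K` satisfies `b·m < n·a` and
`n·a' < b'·m`. -/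
def FareyPairOrd (K a b a2 b2 : ℕ) : Prop :=
  1 ≤ a ∧ 1 ≤ b2 ∧ Nat.Coprime a b ∧ Nat.Coprime a2 b2 ∧
  a ≤ K ∧ b ≤ K ∧ a2 ≤ K ∧ b2 ≤ K ∧ b * a2 < b2 * a ∧
  ¬∃ m n : ℕ, Nat.Coprime m n ∧ ¬(m = 0 ∧ n = 0) ∧ m ≤ K ∧ n ≤ K ∧
    b * m < n * a ∧ n * a2 < b2 * m

/-- The interval-restricted feasible set: `0 < w1 ≤ W1`, `0 < w2 ≤ W2`, and
`b/a < h21·w2/(h11·w1) ≤ b'/a'` in cross-multiplied form. -/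
def Feas (W1 W2 h11 h21 : ℝ) (a b a2 b2 : ℕ) (w1 w2 : ℝ) : Prop :=
  0 < w1 ∧ w1 ≤ W1 ∧ 0 < w2 ∧ w2 ≤ W2 ∧
  (b : ℝ) * h11 * w1 < (a : ℝ) * h21 * w2 ∧
  (a2 : ℝ) * h21 * w2 ≤ (b2 : ℝ) * h11 * w1

section FareyAux

lemma bezout_shift (K a b : ℕ) (ha : 1 ≤ a) (haK : a ≤ K) (hco : Nat.Coprime a b) :
    ∃ m n : ℕ, n * a = m * b + 1 ∧ K - a < m ∧ m ≤ K := by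
  have hcoz : IsCoprime (a : ℤ) (b : ℤ) := Int.isCoprime_iff_gcd_eq_one.mpr (by simpa using hco)
  obtain ⟨u, v, huv⟩ := hcoz
  have hapos : (0:ℤ) < (a:ℤ) := by exact_mod_cast ha
  set mz : ℤ := (-v) % (a:ℤ) with hmzdef
  have hmz0 : 0 ≤ mz := Int.emod_nonneg _ (by positivity)
  have hmzlt : mz < (a:ℤ) := Int.emod_lt_of_pos _ hapos
  have hdvd1 : (a:ℤ) ∣ mz + v := ⟨-((-v)/(a:ℤ)), by rw [hmzdef, Int.emod_def]; ring⟩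
  have hdvd : (a:ℤ) ∣ mz * b + 1 := by
    have h2 : mz * (b:ℤ) + 1 = u * a + (mz + v) * b := by linear_combination -huv
    rw [h2]
    exact dvd_add (dvd_mul_left _ _) (hdvd1.mul_right _)
  set m0 : ℕ := mz.toNat with hm0def
  have hm0a : m0 < a := by omega
  have hdvdN : a ∣ m0 * b + 1 := by
    have hcast : ((m0 * b + 1 : ℕ) : ℤ) = mz * b + 1 := by
      push_cast [Int.toNat_of_nonneg hmz0]; rw [hm0def, Int.toNat_of_nonneg hmz0]
    exact_mod_cast hcast ▸ hdvd
  obtain ⟨q, r, hqr, hr⟩ : ∃ q r, a * q + r = K - m0 ∧ r < a :=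
    ⟨(K - m0)/a, (K - m0)%a, Nat.div_add_mod _ _, Nat.mod_lt _ (by omega)⟩
  have hdvd2 : a ∣ (m0 + a*q) * b + 1 := by
    have h3 : (m0 + a*q)*b + 1 = (m0*b + 1) + a*(q*b) := by ring
    rw [h3]
    exact dvd_add hdvdN (Dvd.intro _ rfl)
  refine ⟨m0 + a * q, ((m0 + a * q) * b + 1)/a, Nat.div_mul_cancel hdvd2, ?_, ?_⟩
  · obtain ⟨t, ht⟩ : ∃ t, a * q = t := ⟨_, rfl⟩
    rw [ht] at hqr ⊢
    omega
  · obtain ⟨t, ht⟩ : ∃ t, a * q = t := ⟨_, rfl⟩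
    rw [ht] at hqr ⊢
    omega

lemma farey_core (K a b a2 b2 : ℕ)
    (ha : 1 ≤ a) (hb2 : 1 ≤ b2)
    (hab : Nat.Coprime a b) (hab2 : Nat.Coprime a2 b2)
    (haK : a ≤ K) (_hbK : b ≤ K) (ha2K : a2 ≤ K) (_hb2K : b2 ≤ K)
    (hord : b * a2 < b2 * a) (hreg : b2 ≤ a2)
    (hnb : ¬∃ m n : ℕ, Nat.Coprime m n ∧ ¬(m = 0 ∧ n = 0) ∧ m ≤ K ∧ n ≤ K ∧
      b * m < n * a ∧ n * a2 < b2 * m) :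
    a * b2 = a2 * b + 1 := by
  obtain ⟨m, n, hna, hm1, hm2⟩ := bezout_shift K a b ha haK hab
  have hm0 : 1 ≤ m := by omega
  have hn1 : 1 ≤ n := by
    rcases Nat.eq_zero_or_pos n with h | h
    · rw [h] at hna; simp at hna
    · exact h
  have ha2pos : 1 ≤ a2 := le_trans hb2 hreg
  have hco : Nat.Coprime m n := by
    have h1 : Nat.gcd m n ∣ m * b := Dvd.dvd.mul_right (Nat.gcd_dvd_left m n) b
    have h2 : Nat.gcd m n ∣ m * b + 1 := hna ▸ Dvd.dvd.mul_right (Nat.gcd_dvd_right m n) a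
    exact Nat.dvd_one.mp ((Nat.dvd_add_right h1).mp h2)
  rcases lt_trichotomy (n * a2) (b2 * m) with hlt | heq | hgt
  · exfalso
    apply hnb
    have hnm : n < m := by
      have : n * a2 < m * a2 := lt_of_lt_of_le hlt (by
        calc b2 * m ≤ a2 * m := Nat.mul_le_mul_right m hreg
          _ = m * a2 := mul_comm _ _)
      exact Nat.lt_of_mul_lt_mul_right this
    refine ⟨m, n, hco, by omega, hm2, by omega, ?_, hlt⟩
    calc b * m = m * b := mul_comm _ _
      _ < m * b + 1 := Nat.lt_succ_self _
      _ = n * a := hna.symm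
  · have hma2 : m = a2 := by
      have hd1 : m ∣ a2 := by
        have h1 : m ∣ n * a2 := heq ▸ dvd_mul_left m b2
        exact Nat.Coprime.dvd_of_dvd_mul_left hco h1
      have hd2 : a2 ∣ m := by
        have h1 : a2 ∣ b2 * m := heq ▸ dvd_mul_left a2 n
        exact hab2.dvd_of_dvd_mul_left h1
      exact Nat.dvd_antisymm hd1 hd2
    have hnb2 : n = b2 := by
      have : n * a2 = b2 * a2 := by rw [heq, hma2]
      exact Nat.eq_of_mul_eq_mul_right (by omega) this
    rw [hma2, hnb2] at hna
    rw [mul_comm a b2]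
    exact hna
  · exfalso
    have hZ1 : (n:ℤ) * a = m * b + 1 := by exact_mod_cast hna
    have hZ2 : (b2:ℤ) * m + 1 ≤ n * a2 := by exact_mod_cast hgt
    have hZ3 : (b:ℤ) * a2 + 1 ≤ b2 * a := by exact_mod_cast hord
    have hZ4 : (K:ℤ) < m + a := by
      have : K < m + a := by omega
      exact_mod_cast this
    have hZ5 : (a2:ℤ) ≤ K := by exact_mod_cast ha2K
    have e1 : (a2:ℤ) * ((n:ℤ) * a) = a2 * ((m:ℤ) * b + 1) := by rw [hZ1]
    have e2 : ((n:ℤ) * a2 - ((b2:ℤ) * m + 1)) * a ≥ 0 :=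
      mul_nonneg (by linarith) (by positivity)
    have e3 : ((b2:ℤ) * a - ((b:ℤ) * a2 + 1)) * m ≥ 0 :=
      mul_nonneg (by linarith) (by positivity)
    linarith [e1, e2, e3, hZ4, hZ5]

lemma farey_symm {K a b a2 b2 : ℕ} (h : FareyPairOrd K a b a2 b2) :
    FareyPairOrd K b2 a2 b a := by
  obtain ⟨h1, h2, h3, h4, h5, h6, h7, h8, h9, h10⟩ := h
  refine ⟨h2, h1, h4.symm, h3.symm, h8, h7, h6, h5, ?_, ?_⟩
  · rw [mul_comm a2 b, mul_comm a b2]; exact h9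
  · rintro ⟨m, n, hc, hz, hmK, hnK, hx, hy⟩
    exact h10 ⟨n, m, hc.symm, by tauto, hnK, hmK,
      by rw [mul_comm b n, mul_comm m a]; exact hy,
      by rw [mul_comm m a2, mul_comm b2 n]; exact hx⟩

lemma farey_det {K a b a2 b2 : ℕ} (h : FareyPairOrd K a b a2 b2) :
    a * b2 = a2 * b + 1 := by
  have hsym := farey_symm h
  obtain ⟨h1, h2, h3, h4, h5, h6, h7, h8, h9, h10⟩ := h
  by_cases hreg : b2 ≤ a2
  · exact farey_core K a b a2 b2 h1 h2 h3 h4 h5 h6 h7 h8 h9 hreg h10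
  · push_neg at hreg
    by_cases hab' : a ≤ b
    · obtain ⟨g1, g2, g3, g4, g5, g6, g7, g8, g9, g10⟩ := hsym
      have := farey_core K b2 a2 b a g1 g2 g3 g4 g5 g6 g7 g8 g9 hab' g10
      rw [mul_comm a b2, mul_comm a2 b]
      exact this
    · push_neg at hab'
      exact absurd ⟨1, 1, Nat.coprime_one_left 1, by omega, by omega, by omega,
        by omega, by omega⟩ h10

lemma mediant_coprime {a b a2 b2 : ℕ} (hdet : a * b2 = a2 * b + 1) :
    Nat.Coprime (a + a2) (b + b2) := by
  rw [← Nat.isCoprime_iff_coprime]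
  refine ⟨(b2:ℤ), -(a2:ℤ), ?_⟩
  have : (a:ℤ) * b2 = a2 * b + 1 := by exact_mod_cast hdet
  push_cast
  linear_combination this

lemma farey_big {K a b a2 b2 : ℕ} (h : FareyPairOrd K a b a2 b2) :
    K < a + a2 ∨ K < b + b2 := by
  by_contra hc
  push_neg at hc
  have hdet := farey_det h
  obtain ⟨h1, h2, h3, h4, h5, h6, h7, h8, h9, h10⟩ := h
  apply h10
  refine ⟨a + a2, b + b2, mediant_coprime hdet, by omega, hc.1, hc.2, ?_, ?_⟩
  · nlinarith
  · nlinarith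

lemma key_ne {K A B : ℕ} (hA : 1 ≤ A) (hB : 1 ≤ B) (hco : Nat.Coprime A B)
    (hbig : K < A ∨ K < B) (m n : ℤ) (hm : |m| ≤ (K:ℤ)) (hn : |n| ≤ (K:ℤ))
    (hne : (m, n) ≠ (0, 0)) : n * (A:ℤ) ≠ m * (B:ℤ) := by
  intro heq
  have hm0 : m ≠ 0 := by
    rintro rfl
    have h0 : n * (A:ℤ) = 0 := by simpa using heq
    have hn0 : n = 0 := by
      rcases mul_eq_zero.mp h0 with h | h
      · exact h
      · exact absurd h (by positivity)
    exact hne (by rw [hn0])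
  have hn0 : n ≠ 0 := by
    rintro rfl
    have h0 : m * (B:ℤ) = 0 := by simpa using heq.symm
    rcases mul_eq_zero.mp h0 with h | h
    · exact hm0 h
    · exact absurd h (by positivity)
  have hcoz : IsCoprime (A:ℤ) (B:ℤ) := by
    rw [Int.isCoprime_iff_gcd_eq_one]
    simpa using hco
  have hdA : (A:ℤ) ∣ m := hcoz.dvd_of_dvd_mul_right ⟨n, by linarith [heq]⟩
  have hdB : (B:ℤ) ∣ n := hcoz.symm.dvd_of_dvd_mul_right ⟨m, by linarith [heq]⟩
  have h3 : (A:ℤ) ≤ |m| := Int.le_of_dvd (abs_pos.mpr hm0) ((dvd_abs _ _).mpr hdA)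
  have h4 : (B:ℤ) ≤ |n| := Int.le_of_dvd (abs_pos.mpr hn0) ((dvd_abs _ _).mpr hdB)
  rcases hbig with h | h
  · have : (K:ℤ) < A := by exact_mod_cast h
    linarith
  · have : (K:ℤ) < B := by exact_mod_cast h
    linarith

end FareyAux

section DistAux

lemma minDist1_bdd (M : ℕ) (h11 h21 w1 w2 : ℝ) :
    BddBelow {d : ℝ | ∃ m n : ℤ, (m, n) ≠ (0, 0) ∧ |m| ≤ (M : ℤ) - 1 ∧ |n| ≤ (M : ℤ) - 1 ∧
      d = |h11 * w1 * n - h21 * w2 * m|} := by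
  refine ⟨0, ?_⟩
  rintro d ⟨m, n, _, _, _, rfl⟩
  positivity

lemma minDist1_le (M : ℕ) (h11 h21 w1 w2 : ℝ) (m n : ℤ) (hmn : (m, n) ≠ (0, 0))
    (hm : |m| ≤ (M:ℤ) - 1) (hn : |n| ≤ (M:ℤ) - 1) :
    minDist1 M h11 h21 w1 w2 ≤ |h11 * w1 * n - h21 * w2 * m| :=
  csInf_le (minDist1_bdd M h11 h21 w1 w2) ⟨m, n, hmn, hm, hn, rfl⟩

lemma minDist_eval (M : ℕ) (hM : 2 ≤ M) (a b a2 b2 : ℕ)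
    (hfp : FareyPairOrd (M - 1) a b a2 b2)
    (h11 h21 w1 w2 : ℝ) (h11p : 0 < h11) (hw1 : 0 < w1)
    (hrat : h21 * w2 * ((a:ℝ) + a2) = h11 * w1 * ((b:ℝ) + b2)) :
    minDist1 M h11 h21 w1 w2 = h11 * w1 / ((a:ℝ) + a2) := by
  have hdet := farey_det hfp
  have hbig := farey_big hfp
  have hcoAB : Nat.Coprime (a + a2) (b + b2) := mediant_coprime hdet
  obtain ⟨ha1, hb21, _, _, haK, hbK, ha2K, hb2K, hord, hnb⟩ := hfp
  have hApos : (0:ℝ) < (a:ℝ) + a2 := by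
    have h1 : (1:ℝ) ≤ (a:ℝ) := by exact_mod_cast ha1
    have h2 : (0:ℝ) ≤ (a2:ℝ) := Nat.cast_nonneg a2
    linarith
  have hAne : ((a:ℝ) + a2) ≠ 0 := ne_of_gt hApos
  have hdR : (a:ℝ) * b2 = (a2:ℝ) * b + 1 := by exact_mod_cast hdet
  have hc : 0 < h11 * w1 / ((a:ℝ) + a2) := by positivity
  have hKcast : ((M - 1 : ℕ) : ℤ) = (M:ℤ) - 1 := by
    push_cast [Nat.cast_sub (by omega : 1 ≤ M)]; ring
  apply IsLeast.csInf_eq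
  constructor
  · refine ⟨(a2:ℤ), (b2:ℤ), ?_, ?_, ?_, ?_⟩
    · intro hcon
      rw [Prod.mk.injEq] at hcon
      have : b2 = 0 := by exact_mod_cast hcon.2
      omega
    · rw [abs_of_nonneg (by positivity : (0:ℤ) ≤ ((a2:ℕ):ℤ))]
      omega
    · rw [abs_of_nonneg (by positivity : (0:ℤ) ≤ ((b2:ℕ):ℤ))]
      omega
    · push_cast
      have hx : h11 * w1 * (b2:ℝ) - h21 * w2 * (a2:ℝ) = h11 * w1 / ((a:ℝ) + a2) := by
        rw [eq_div_iff hAne]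
        linear_combination (-(a2:ℝ)) * hrat + (h11 * w1) * hdR
      rw [hx, abs_of_pos hc]
  · rintro d ⟨m, n, hmn, hm, hn, rfl⟩
    rw [← hKcast] at hm hn
    have hne0 : n * ((a + a2 : ℕ):ℤ) ≠ m * ((b + b2 : ℕ):ℤ) :=
      key_ne (by omega) (by omega) hcoAB hbig m n hm hn hmn
    have hz : (1:ℝ) ≤ |(n:ℝ) * ((a:ℝ) + a2) - (m:ℝ) * ((b:ℝ) + b2)| := by
      have h1 : (1:ℤ) ≤ |n * ((a + a2 : ℕ):ℤ) - m * ((b + b2 : ℕ):ℤ)| :=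
        Int.one_le_abs (sub_ne_zero.mpr hne0)
      have h2 : (1:ℝ) ≤ |((n * ((a + a2 : ℕ):ℤ) - m * ((b + b2 : ℕ):ℤ) : ℤ) : ℝ)| := by
        exact_mod_cast h1
      have h3 : ((n * ((a + a2 : ℕ):ℤ) - m * ((b + b2 : ℕ):ℤ) : ℤ) : ℝ)
          = (n:ℝ) * ((a:ℝ) + a2) - (m:ℝ) * ((b:ℝ) + b2) := by push_cast; ring
      rwa [h3] at h2
    have hrepr : h11 * w1 * (n:ℝ) - h21 * w2 * (m:ℝ)
        = (h11 * w1 / ((a:ℝ) + a2)) * ((n:ℝ) * ((a:ℝ) + a2) - (m:ℝ) * ((b:ℝ) + b2)) := by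
      rw [div_mul_eq_mul_div, eq_div_iff hAne]
      linear_combination (-(m:ℝ)) * hrat
    calc h11 * w1 / ((a:ℝ) + a2) = (h11 * w1 / ((a:ℝ) + a2)) * 1 := (mul_one _).symm
      _ ≤ (h11 * w1 / ((a:ℝ) + a2)) * |(n:ℝ) * ((a:ℝ) + a2) - (m:ℝ) * ((b:ℝ) + b2)| :=
          mul_le_mul_of_nonneg_left hz hc.le
      _ = |(h11 * w1 / ((a:ℝ) + a2)) * ((n:ℝ) * ((a:ℝ) + a2) - (m:ℝ) * ((b:ℝ) + b2))| := by
          rw [abs_mul, abs_of_pos hc]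
      _ = |h11 * w1 * (n:ℝ) - h21 * w2 * (m:ℝ)| := by rw [← hrepr]

end DistAux

set_option maxHeartbeats 1600000 in
/-- Lemma 1, case 1(b): weak-cross-link subcase with small direct-link ratio. -/
theorem lemma1_case1b (M : ℕ) (hM : 2 ≤ M) (hMe : Even M)
    (h11 h21 h22 p1 p2 : ℝ)
    (h11p : 0 < h11) (h21p : 0 < h21) (h22p : 0 < h22)
    (hp1 : 0 < p1) (hp2 : 0 < p2)
    (a b a2 b2 : ℕ) (hfp : FareyPairOrd (M - 1) a b a2 b2)
    (W1 W2 : ℝ)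
    (hW1 : W1 = Real.sqrt (3 * p1 / ((M : ℝ) ^ 2 - 1)))
    (hW2 : W2 = Real.sqrt (3 * p2 / ((M : ℝ) ^ 2 - 1)))
    (hcross : h21 / h22 ≤ (b : ℝ) + b2)
    (hratio : h11 / h21 <
        Real.sqrt p2 * ((a : ℝ) + a2) / (Real.sqrt p1 * ((b : ℝ) + b2))) :
    IsGreatest {v : ℝ | ∃ w1 w2 : ℝ, Feas W1 W2 h11 h21 a b a2 b2 w1 w2 ∧
        v = f M h11 h21 h22 w1 w2} (h11 / ((a : ℝ) + a2) * W1) ∧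
    Feas W1 W2 h11 h21 a b a2 b2
      W1 ((((b : ℝ) + b2) * h11 / (((a : ℝ) + a2) * h21)) * W1) ∧
    f M h11 h21 h22 W1 ((((b : ℝ) + b2) * h11 / (((a : ℝ) + a2) * h21)) * W1) =
      h11 / ((a : ℝ) + a2) * W1 := by
  have hdet := farey_det hfp
  have hdR : (a:ℝ) * b2 = (a2:ℝ) * b + 1 := by exact_mod_cast hdet
  have ha1 : 1 ≤ a := hfp.1
  have hb21 : 1 ≤ b2 := hfp.2.1
  have haK : a ≤ M - 1 := hfp.2.2.2.2.1
  have hbK : b ≤ M - 1 := hfp.2.2.2.2.2.1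
  have ha2K : a2 ≤ M - 1 := hfp.2.2.2.2.2.2.1
  have hb2K : b2 ≤ M - 1 := hfp.2.2.2.2.2.2.2.1
  have hMR : (2:ℝ) ≤ (M:ℝ) := by exact_mod_cast hM
  have hMsq : (0:ℝ) < (M:ℝ)^2 - 1 := by nlinarith
  have hApos : (0:ℝ) < (a:ℝ) + a2 := by
    have h1 : (1:ℝ) ≤ (a:ℝ) := by exact_mod_cast ha1
    have h2 : (0:ℝ) ≤ (a2:ℝ) := Nat.cast_nonneg a2
    linarith
  have hBpos : (0:ℝ) < (b:ℝ) + b2 := by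
    have h1 : (1:ℝ) ≤ (b2:ℝ) := by exact_mod_cast hb21
    have h2 : (0:ℝ) ≤ (b:ℝ) := Nat.cast_nonneg b
    linarith
  set s : ℝ := Real.sqrt (3 / ((M:ℝ)^2 - 1)) with hs
  have hspos : 0 < s := Real.sqrt_pos.mpr (by positivity)
  have hW1s : W1 = Real.sqrt p1 * s := by
    rw [hW1, hs, show 3 * p1 / ((M:ℝ)^2 - 1) = p1 * (3 / ((M:ℝ)^2 - 1)) by ring,
      Real.sqrt_mul hp1.le]
  have hW2s : W2 = Real.sqrt p2 * s := by
    rw [hW2, hs, show 3 * p2 / ((M:ℝ)^2 - 1) = p2 * (3 / ((M:ℝ)^2 - 1)) by ring,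
      Real.sqrt_mul hp2.le]
  have hW1pos : 0 < W1 := by
    rw [hW1s]
    have := Real.sqrt_pos.mpr hp1
    positivity
  set w2s : ℝ := (((b:ℝ) + b2) * h11 / (((a:ℝ) + a2) * h21)) * W1 with hw2sdef
  have hw2spos : 0 < w2s := by
    rw [hw2sdef]
    positivity
  have hrat : h21 * w2s * ((a:ℝ) + a2) = h11 * W1 * ((b:ℝ) + b2) := by
    rw [hw2sdef]
    field_simp
  have hXpos : 0 < h11 * W1 := mul_pos h11p hW1pos
  have hXdet : h11 * W1 * ((a:ℝ) * b2) = h11 * W1 * ((a2:ℝ) * b + 1) := by rw [hdR]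
  have hkey : h11 * (Real.sqrt p1 * ((b:ℝ) + b2)) < Real.sqrt p2 * ((a:ℝ) + a2) * h21 := by
    have hden : 0 < Real.sqrt p1 * ((b:ℝ) + b2) := by
      have := Real.sqrt_pos.mpr hp1
      positivity
    exact (div_lt_div_iff₀ h21p hden).mp hratio
  have hw2sle : w2s ≤ W2 := by
    rw [hw2sdef, hW1s, hW2s, div_mul_eq_mul_div, div_le_iff₀ (by positivity)]
    nlinarith [mul_lt_mul_of_pos_right hkey hspos]
  have hlt1 : (b:ℝ) * h11 * W1 < (a:ℝ) * h21 * w2s := by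
    rw [← mul_lt_mul_iff_left₀ hApos]
    have e' : (a:ℝ) * (h21 * w2s * ((a:ℝ)+a2)) = (a:ℝ) * (h11 * W1 * ((b:ℝ)+b2)) := by
      rw [hrat]
    linarith [e', hXdet, hXpos]
  have hle2 : (a2:ℝ) * h21 * w2s ≤ (b2:ℝ) * h11 * W1 := by
    rw [← mul_le_mul_iff_left₀ hApos]
    have e' : (a2:ℝ) * (h21 * w2s * ((a:ℝ)+a2)) = (a2:ℝ) * (h11 * W1 * ((b:ℝ)+b2)) := by
      rw [hrat]
    linarith [e', hXdet, hXpos]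
  have hfeas : Feas W1 W2 h11 h21 a b a2 b2 W1 w2s :=
    ⟨hW1pos, le_refl _, hw2spos, hw2sle, hlt1, hle2⟩
  have hmd : minDist1 M h11 h21 W1 w2s = h11 * W1 / ((a:ℝ) + a2) :=
    minDist_eval M hM a b a2 b2 hfp h11 h21 W1 w2s h11p hW1pos hrat
  have hcross' : h21 ≤ h22 * ((b:ℝ) + b2) := by
    rw [div_le_iff₀ h22p] at hcross
    linarith
  have hvala : h11 * W1 / ((a:ℝ) + a2) ≤ h22 * w2s := by
    rw [div_le_iff₀ hApos, ← mul_le_mul_iff_left₀ h21p]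
    have e'' : h22 * (h21 * w2s * ((a:ℝ)+a2)) = h22 * (h11 * W1 * ((b:ℝ)+b2)) := by
      rw [hrat]
    have e3 := mul_le_mul_of_nonneg_right hcross' hXpos.le
    linarith [e'', e3]
  have hval : f M h11 h21 h22 W1 w2s = h11 / ((a:ℝ) + a2) * W1 := by
    unfold f
    rw [hmd, min_eq_left hvala]
    ring
  have hub : ∀ w1 w2 : ℝ, Feas W1 W2 h11 h21 a b a2 b2 w1 w2 →
      f M h11 h21 h22 w1 w2 ≤ h11 / ((a:ℝ) + a2) * W1 := by
    rintro w1 w2 ⟨hw1p, hw1le, hw2p, hw2le, hfl, hfr⟩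
    have h1 : minDist1 M h11 h21 w1 w2 ≤ (a:ℝ) * (h21 * w2) - (b:ℝ) * (h11 * w1) := by
      have hmem := minDist1_le M h11 h21 w1 w2 (a:ℤ) (b:ℤ)
        (by intro h; rw [Prod.mk.injEq] at h; omega)
        (by rw [abs_of_nonneg (by positivity : (0:ℤ) ≤ ((a:ℕ):ℤ))]; omega)
        (by rw [abs_of_nonneg (by positivity : (0:ℤ) ≤ ((b:ℕ):ℤ))]; omega)
      push_cast at hmem
      rw [abs_of_neg (by linarith [hfl] : h11 * w1 * (b:ℝ) - h21 * w2 * (a:ℝ) < 0)] at hmem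
      linarith [hmem]
    have h2 : minDist1 M h11 h21 w1 w2 ≤ (b2:ℝ) * (h11 * w1) - (a2:ℝ) * (h21 * w2) := by
      have hmem := minDist1_le M h11 h21 w1 w2 (a2:ℤ) (b2:ℤ)
        (by intro h; rw [Prod.mk.injEq] at h; omega)
        (by rw [abs_of_nonneg (by positivity : (0:ℤ) ≤ ((a2:ℕ):ℤ))]; omega)
        (by rw [abs_of_nonneg (by positivity : (0:ℤ) ≤ ((b2:ℕ):ℤ))]; omega)
      push_cast at hmem
      rw [abs_of_nonneg (by linarith [hfr] : 0 ≤ h11 * w1 * (b2:ℝ) - h21 * w2 * (a2:ℝ))] at hmem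
      linarith [hmem]
    have h3 : minDist1 M h11 h21 w1 w2 ≤ h11 * w1 / ((a:ℝ) + a2) := by
      rw [le_div_iff₀ hApos]
      have h1' := mul_le_mul_of_nonneg_left h1 (Nat.cast_nonneg (α := ℝ) a2)
      have h2' := mul_le_mul_of_nonneg_left h2 (Nat.cast_nonneg (α := ℝ) a)
      have hdX : h11 * w1 * ((a:ℝ) * b2) = h11 * w1 * ((a2:ℝ) * b + 1) := by rw [hdR]
      linarith [h1', h2', hdX]
    have h4 : h11 * w1 / ((a:ℝ) + a2) ≤ h11 / ((a:ℝ) + a2) * W1 := by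
      rw [show h11 / ((a:ℝ) + a2) * W1 = h11 * W1 / ((a:ℝ) + a2) by ring]
      gcongr
    calc f M h11 h21 h22 w1 w2 ≤ minDist1 M h11 h21 w1 w2 := min_le_left _ _
      _ ≤ h11 * w1 / ((a:ℝ) + a2) := h3
      _ ≤ h11 / ((a:ℝ) + a2) * W1 := h4
  refine ⟨⟨⟨W1, w2s, hfeas, hval.symm⟩, ?_⟩, hfeas, hval⟩
  rintro v ⟨w1, w2, hf, rfl⟩
  exact hub w1 w2 hf
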